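/- For integers c_1 ≥ 0 and c_2 ≥ 0, integers k_1 ≥ 1 and k_2 ≥ 2, the double series Σ_{0 < n_1 < n_2} 1/((n_1+c_1)^{k_1} (n_2+c_2)^{k_2}) converges, and its value is a ℚ-linear combination of multiple zeta values of weight at most k_1 + k_2 and depth at most 2 (together with rational numbers). -/

import Mathlib

/-- The set of multiple zeta values of weight at most `w` and depth at most `d`
(including 1 as the empty multiple zeta value). -/
def mzvSet (w d : ℕ) : Set ℝ :=
  {x | ∃ (r : ℕ) (k : Fin r → ℕ), (∀ i, 1 ≤ k i) ∧
    (∀ i : Fin r, (i : ℕ) = r - 1 → 2 ≤ k i) ∧ (∑ i, k i) ≤ w ∧ r ≤ d ∧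
    x = ∑' n : {n : Fin r → ℕ+ // StrictMono n}, ∏ i, ((n.1 i : ℝ))⁻¹ ^ (k i)}

open Filter Topology
open Filter Topology

lemma tendsto_inv_add (a : ℝ) : Tendsto (fun n : ℕ => (a + n)⁻¹) atTop (𝓝 0) := by
  apply Tendsto.comp tendsto_inv_atTop_zero
  exact tendsto_atTop_add_const_left _ a tendsto_natCast_atTop_atTop

lemma tele_hasSum (a : ℝ) (ha : 0 < a) :
    HasSum (fun n : ℕ => (a + n)⁻¹ - (a + n + 1)⁻¹) a⁻¹ := by
  have hn : ∀ i : ℕ, 0 ≤ (a + i)⁻¹ - (a + i + 1)⁻¹ := by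
    intro i
    have h1 : (0:ℝ) < a + i := by positivity
    have : (a + i + 1)⁻¹ ≤ (a + i)⁻¹ := by
      apply inv_anti₀ h1; linarith
    linarith
  rw [hasSum_iff_tendsto_nat_of_nonneg hn]
  have heq : ∀ n : ℕ, ∑ i ∈ Finset.range n, ((a + i)⁻¹ - (a + i + 1)⁻¹) = a⁻¹ - (a + n)⁻¹ := by
    intro n
    have h := Finset.sum_range_sub' (fun i : ℕ => (a + i)⁻¹) n
    have : ∀ i : ℕ, (a + i)⁻¹ - (a + i + 1)⁻¹ = (a + i)⁻¹ - (a + (i+1:ℕ))⁻¹ := by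
      intro i; push_cast; ring_nf
    simp only [this]
    rw [h]; norm_num
  simp only [heq]
  have := (tendsto_inv_add a).const_sub a⁻¹
  simpa using this

lemma summable_inv_sq : Summable (fun n : ℕ => (((n:ℝ)+1)^2)⁻¹) := by
  have := (summable_nat_add_iff (f := fun n : ℕ => 1/(n:ℝ)^2) 1).2
    (Real.summable_one_div_nat_pow.2 one_lt_two)
  simpa [one_div] using this

lemma summable_shift (x y : ℝ) (hx : 1 ≤ x) (hy : 1 ≤ y) (p q : ℕ) (h : 2 ≤ p+q) :
    Summable (fun n : ℕ => ((x+n)^p * (y+n)^q)⁻¹) := by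
  apply Summable.of_nonneg_of_le (fun n => by positivity) _ summable_inv_sq
  intro n
  have hn1 : (1:ℝ) ≤ (n:ℝ)+1 := by linarith [Nat.cast_nonneg (α:=ℝ) n]
  have h1 : ((n:ℝ)+1)^2 ≤ (x+n)^p * (y+n)^q := by
    calc ((n:ℝ)+1)^2 ≤ ((n:ℝ)+1)^(p+q) := pow_le_pow_right₀ hn1 h
      _ = ((n:ℝ)+1)^p * ((n:ℝ)+1)^q := pow_add _ _ _
      _ ≤ (x+n)^p * (y+n)^q := by
          apply mul_le_mul
          · apply pow_le_pow_left₀ (by positivity) (by linarith)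
          · apply pow_le_pow_left₀ (by positivity) (by linarith)
          · positivity
          · positivity
  exact inv_anti₀ (by positivity) h1

lemma tail_le (y : ℝ) (hy : 0 < y) (q : ℕ) (hq : 2 ≤ q) :
    ∑' j : ℕ, ((y+1+(j:ℝ))^q)⁻¹ ≤ y⁻¹ := by
  have hsum : Summable (fun j : ℕ => ((y+1+(j:ℝ))^q)⁻¹) := by
    have := summable_shift (y+1) (y+1) (by linarith) (by linarith) 0 q (by omega)
    simpa using this
  have htele := tele_hasSum y hy
  rw [← htele.tsum_eq]
  apply Summable.tsum_le_tsum _ hsum htele.summable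
  intro j
  have h1 : (0:ℝ) < y + j := by positivity
  have h2 : (0:ℝ) < y + j + 1 := by linarith
  have key : (y+j)⁻¹ - (y+j+1)⁻¹ = ((y+j)*(y+j+1))⁻¹ := by
    field_simp
    ring
  rw [key]
  apply inv_anti₀ (by positivity)
  calc (y+j)*(y+j+1) ≤ (y+j+1)^2 := by nlinarith
    _ ≤ (y+1+j)^2 := by nlinarith
    _ ≤ (y+1+j)^q := pow_le_pow_right₀ (by linarith) hq

lemma succPNat_real (i : ℕ) : ((i.succPNat : ℕ+) : ℝ) = (i : ℝ) + 1 := by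
  rw [show ((i.succPNat : ℕ+) : ℝ) = ((i.succPNat : ℕ) : ℝ) from rfl, Nat.succPNat_coe]
  push_cast; ring

lemma one_mem_mzvSet (w d : ℕ) : (1:ℝ) ∈ mzvSet w d := by
  refine ⟨0, fun i => i.elim0, fun i => i.elim0, fun i => i.elim0, by simp, by simp, ?_⟩
  have hdef : ∀ y : {n : Fin 0 → ℕ+ // StrictMono n},
      y = ⟨fun i => i.elim0, fun a => a.elim0⟩ := by
    intro y; apply Subtype.ext; funext i; exact i.elim0
  rw [tsum_eq_single (⟨fun i => i.elim0, fun a => a.elim0⟩ : {n : Fin 0 → ℕ+ // StrictMono n})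
    (fun b hb => absurd (hdef b) hb)]
  simp

lemma rat_mem_span (w : ℕ) (q : ℚ) : (q:ℝ) ∈ Submodule.span ℚ (mzvSet w 2) := by
  have := Submodule.smul_mem (Submodule.span ℚ (mzvSet w 2)) q
    (Submodule.subset_span (one_mem_mzvSet w 2))
  simpa [Rat.smul_def] using this

def e1Equiv : ℕ ≃ {n : Fin 1 → ℕ+ // StrictMono n} where
  toFun := fun m => ⟨fun _ => m.succPNat, Subsingleton.strictMono _⟩
  invFun := fun n => (n.1 0).natPred
  left_inv := fun m => by simp
  right_inv := fun n => by
    apply Subtype.ext; funext i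
    have : i = 0 := Subsingleton.elim _ _
    subst this; simp [PNat.succPNat_natPred]

lemma zeta_mem (w s : ℕ) (hs2 : 2 ≤ s) (hsw : s ≤ w) :
    (∑' n : ℕ, (((n:ℝ)+1)^s)⁻¹) ∈ mzvSet w 2 := by
  refine ⟨1, ![s], ?_, ?_, ?_, by norm_num, ?_⟩
  · intro i; have : i = 0 := Subsingleton.elim _ _; subst this; simp; omega
  · intro i _; have : i = 0 := Subsingleton.elim _ _; subst this; simpa using hs2
  · simpa using hsw
  · rw [← e1Equiv.tsum_eq]
    apply tsum_congr
    intro m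
    rw [Fin.prod_univ_one]
    show ((((m:ℝ))+1)^s)⁻¹ = ((m.succPNat : ℕ+):ℝ)⁻¹ ^ (![s] 0)
    rw [succPNat_real, inv_pow]; simp

def e2Equiv : ℕ×ℕ ≃ {n : Fin 2 → ℕ+ // StrictMono n} where
  toFun := fun x => ⟨![x.1.succPNat, (x.1+x.2+1).succPNat], by
    have key : x.1.succPNat < (x.1+x.2+1).succPNat := by
      rw [← PNat.coe_lt_coe, Nat.succPNat_coe, Nat.succPNat_coe]; omega
    intro a b hab
    fin_cases a <;> fin_cases b <;>
      simp_all <;> first | exact key | exact absurd hab (by omega)⟩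
  invFun := fun n => ((n.1 0).natPred, (n.1 1 : ℕ) - (n.1 0 : ℕ) - 1)
  left_inv := fun x => by
    apply Prod.ext
    · simp
    · simp [PNat.natPred, Nat.succPNat_coe]; omega
  right_inv := fun n => by
    have h01 : n.1 0 < n.1 1 := n.2 (show (0:Fin 2) < 1 by decide)
    have h01' : ((n.1 0 : ℕ+) : ℕ) < ((n.1 1 : ℕ+) : ℕ) := by exact_mod_cast h01
    have hp0 : 0 < ((n.1 0 : ℕ+) : ℕ) := (n.1 0).2
    apply Subtype.ext; funext i
    fin_cases i
    · simp [PNat.succPNat_natPred]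
    · show ((n.1 0).natPred + ((n.1 1 : ℕ) - (n.1 0 : ℕ) - 1) + 1).succPNat = n.1 1
      apply PNat.coe_injective
      rw [Nat.succPNat_coe]
      simp [PNat.natPred]
      omega

lemma double_mem (k₁ k₂ : ℕ) (h₁ : 1 ≤ k₁) (h₂ : 2 ≤ k₂) :
    (∑' x : ℕ×ℕ, (((x.1:ℝ)+1)^k₁ * ((x.1:ℝ)+(x.2:ℝ)+2)^k₂)⁻¹) ∈ mzvSet (k₁+k₂) 2 := by
  refine ⟨2, ![k₁, k₂], ?_, ?_, ?_, le_refl 2, ?_⟩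
  · intro i; fin_cases i <;> simp <;> omega
  · intro i hi; fin_cases i
    · simp at hi
    · simpa using h₂
  · simp [Fin.sum_univ_two]
  · rw [← e2Equiv.tsum_eq]
    apply tsum_congr
    intro x
    rw [Fin.prod_univ_two]
    show (((x.1:ℝ)+1)^k₁ * ((x.1:ℝ)+(x.2:ℝ)+2)^k₂)⁻¹
      = ((x.1.succPNat : ℕ+):ℝ)⁻¹ ^ (![k₁,k₂] 0) * (((x.1+x.2+1).succPNat : ℕ+):ℝ)⁻¹ ^ (![k₁,k₂] 1)
    rw [succPNat_real, succPNat_real]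
    simp only [Matrix.cons_val_zero, Matrix.cons_val_one, Matrix.head_cons]
    rw [inv_pow, inv_pow, mul_inv]
    push_cast
    ring_nf

lemma summable_single (c s : ℕ) (hs : 2 ≤ s) :
    Summable (fun n : ℕ => (((n:ℝ)+1+c)^s)⁻¹) := by
  have h := summable_shift (1+c) (1+c) (by linarith [Nat.cast_nonneg (α:=ℝ) c])
    (by linarith [Nat.cast_nonneg (α:=ℝ) c]) 0 s (by omega)
  apply h.congr
  intro n; simp; ring_nf

lemma SZ_mem (w s c : ℕ) (hs : 2 ≤ s) (hw : s ≤ w) :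
    (∑' n : ℕ, (((n:ℝ)+1+c)^s)⁻¹) ∈ Submodule.span ℚ (mzvSet w 2) := by
  induction c with
  | zero =>
    apply Submodule.subset_span
    have := zeta_mem w s hs hw
    simpa using this
  | succ c ih =>
    have hsum := summable_single c s hs
    have hshift := Summable.tsum_eq_zero_add hsum
    have he : (∑' n : ℕ, (((n:ℝ)+1+(c+1:ℕ))^s)⁻¹)
        = (∑' n : ℕ, (((n:ℝ)+1+c)^s)⁻¹) - (((0:ℝ)+1+c)^s)⁻¹ := by
      rw [hshift]
      push_cast
      rw [show (∑' n : ℕ, (((n:ℝ)+1+((c:ℝ)+1))^s)⁻¹) = ∑' n : ℕ, ((((n:ℝ)+1)+1+(c:ℝ))^s)⁻¹ from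
        tsum_congr (fun n => by ring_nf)]
      ring
    rw [he]
    apply sub_mem ih
    have : (((0:ℝ)+1+c)^s)⁻¹ = ((((1+c:ℚ)^s)⁻¹ : ℚ) : ℝ) := by push_cast; ring_nf
    rw [this]
    exact rat_mem_span w _

lemma tele_span (w a b : ℕ) (hab : a < b) :
    Summable (fun n : ℕ => ((n:ℝ)+1+a)⁻¹ - ((n:ℝ)+1+b)⁻¹) ∧
    (∑' n : ℕ, (((n:ℝ)+1+a)⁻¹ - ((n:ℝ)+1+b)⁻¹)) ∈ Submodule.span ℚ (mzvSet w 2) := by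
  induction b with
  | zero => omega
  | succ b ih =>
    have hb1 : HasSum (fun n : ℕ => ((n:ℝ)+1+b)⁻¹ - ((n:ℝ)+1+(b+1:ℕ))⁻¹) ((1+b:ℝ))⁻¹ := by
      have := tele_hasSum (1+(b:ℝ)) (by positivity)
      apply this.congr_fun
      intro n; push_cast; ring_nf
    rcases Nat.lt_or_ge a b with h | h
    · obtain ⟨ihs, ihm⟩ := ih h
      have hsum : Summable (fun n : ℕ => ((n:ℝ)+1+a)⁻¹ - ((n:ℝ)+1+(b+1:ℕ))⁻¹) := by
        have := ihs.add hb1.summable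
        apply this.congr; intro n; ring
      refine ⟨hsum, ?_⟩
      have : (∑' n : ℕ, (((n:ℝ)+1+a)⁻¹ - ((n:ℝ)+1+(b+1:ℕ))⁻¹))
          = (∑' n : ℕ, (((n:ℝ)+1+a)⁻¹ - ((n:ℝ)+1+b)⁻¹))
            + (∑' n : ℕ, (((n:ℝ)+1+b)⁻¹ - ((n:ℝ)+1+(b+1:ℕ))⁻¹)) := by
        rw [← Summable.tsum_add ihs hb1.summable]
        apply tsum_congr; intro n; ring
      rw [this]
      apply add_mem ihm
      rw [hb1.tsum_eq]
      have : ((1+b:ℝ))⁻¹ = ((((1+b:ℚ))⁻¹ : ℚ) : ℝ) := by push_cast; ring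
      rw [this]
      exact rat_mem_span w _
    · have hab' : a = b := by omega
      subst hab'
      refine ⟨hb1.summable, ?_⟩
      rw [hb1.tsum_eq]
      have : ((1+a:ℝ))⁻¹ = ((((1+a:ℚ))⁻¹ : ℚ) : ℝ) := by push_cast; ring
      rw [this]
      exact rat_mem_span w _

lemma summable_mix (a b p q : ℕ) (h : 2 ≤ p+q) :
    Summable (fun n : ℕ => (((n:ℝ)+1+a)^p * ((n:ℝ)+1+b)^q)⁻¹) := by
  have hs := summable_shift (1+a) (1+b) (by linarith [Nat.cast_nonneg (α:=ℝ) a])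
    (by linarith [Nat.cast_nonneg (α:=ℝ) b]) p q h
  apply hs.congr
  intro n; ring_nf

lemma pf_identity (x y d : ℝ) (hx : 0 < x) (hy : 0 < y) (hd : d ≠ 0) (h : y - x = d) (p q : ℕ) :
    (x^(p+1) * y^(q+1))⁻¹ = d⁻¹ * ((x^(p+1) * y^q)⁻¹ - (x^p * y^(q+1))⁻¹) := by
  have hx0 : x ≠ 0 := ne_of_gt hx
  have hy0 : y ≠ 0 := ne_of_gt hy
  have h1 : (x^(p+1) * y^q)⁻¹ - (x^p * y^(q+1))⁻¹ = (y - x) * (x^(p+1) * y^(q+1))⁻¹ := by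
    field_simp
    ring
  rw [h1, h, ← mul_assoc, inv_mul_cancel₀ hd, one_mul]

lemma MX_mem : ∀ (m w p q a b : ℕ), p+q = m → 2 ≤ m → m ≤ w →
    (∑' n : ℕ, (((n:ℝ)+1+a)^p * ((n:ℝ)+1+b)^q)⁻¹) ∈ Submodule.span ℚ (mzvSet w 2) := by
  intro m
  induction m using Nat.strong_induction_on with
  | _ m ih =>
  intro w p q a b hm h2 hw
  rcases Nat.eq_zero_or_pos p with hp | hp
  · subst hp
    simp only [pow_zero, one_mul]
    exact SZ_mem w q b (by omega) (by omega)
  rcases Nat.eq_zero_or_pos q with hq | hq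
  · subst hq
    simp only [pow_zero, mul_one]
    exact SZ_mem w p a (by omega) (by omega)
  rcases eq_or_ne a b with hab | hab
  · subst hab
    rw [show (∑' n : ℕ, (((n:ℝ)+1+a)^p * ((n:ℝ)+1+a)^q)⁻¹)
        = ∑' n : ℕ, (((n:ℝ)+1+a)^(p+q))⁻¹ from tsum_congr (fun n => by rw [← pow_add])]
    exact SZ_mem w (p+q) a (by omega) (by omega)
  -- a ≠ b
  set d : ℚ := (b:ℚ) - (a:ℚ) with hddef
  have hdne : d ≠ 0 := by
    simp only [hddef, sub_ne_zero]
    exact fun h => hab (by exact_mod_cast h.symm)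
  have hdcast : ((d:ℚ):ℝ) = (b:ℝ) - (a:ℝ) := by push_cast [hddef]; ring
  have hdR : ((d:ℚ):ℝ) ≠ 0 := by
    exact_mod_cast (Rat.cast_ne_zero (α := ℝ)).2 hdne
  have hpos : ∀ (n c : ℕ), (0:ℝ) < (n:ℝ)+1+c := fun n c => by positivity
  -- telescoping membership of ∑' (x⁻¹ - y⁻¹)
  have hdiff : Summable (fun n : ℕ => ((n:ℝ)+1+a)⁻¹ - ((n:ℝ)+1+b)⁻¹) ∧
      (∑' n : ℕ, (((n:ℝ)+1+a)⁻¹ - ((n:ℝ)+1+b)⁻¹)) ∈ Submodule.span ℚ (mzvSet w 2) := by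
    rcases Nat.lt_or_ge a b with h | h
    · exact tele_span w a b h
    · have hba : b < a := by omega
      obtain ⟨s2, m2⟩ := tele_span w b a hba
      constructor
      · apply s2.neg.congr; intro n; ring
      · have : (∑' n : ℕ, (((n:ℝ)+1+a)⁻¹ - ((n:ℝ)+1+b)⁻¹))
            = - ∑' n : ℕ, (((n:ℝ)+1+b)⁻¹ - ((n:ℝ)+1+a)⁻¹) := by
          rw [← tsum_neg]
          apply tsum_congr; intro n; ring
        rw [this]
        exact neg_mem m2
  obtain ⟨p', rfl⟩ : ∃ p', p = p' + 1 := ⟨p - 1, by omega⟩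
  obtain ⟨q', rfl⟩ : ∃ q', q = q' + 1 := ⟨q - 1, by omega⟩
  rcases Nat.lt_or_ge m 3 with hm3 | hm3
  · -- m = 2, p = q = 1
    have hp1 : p' = 0 := by omega
    have hq1 : q' = 0 := by omega
    subst hp1; subst hq1
    have key : ∀ n : ℕ, ((((n:ℝ)+1+a))^(0+1) * (((n:ℝ)+1+b))^(0+1))⁻¹
        = ((d:ℚ):ℝ)⁻¹ * ((((n:ℝ)+1+a))⁻¹ - (((n:ℝ)+1+b))⁻¹) := by
      intro n
      have := pf_identity ((n:ℝ)+1+a) ((n:ℝ)+1+b) ((d:ℚ):ℝ) (hpos n a) (hpos n b) hdR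
        (by rw [hdcast]; ring) 0 0
      simpa using this
    rw [tsum_congr key, tsum_mul_left, ← Rat.cast_inv, ← Rat.smul_def]
    exact Submodule.smul_mem _ _ hdiff.2
  · -- m ≥ 3
    have key : ∀ n : ℕ, ((((n:ℝ)+1+a))^(p'+1) * (((n:ℝ)+1+b))^(q'+1))⁻¹
        = ((d:ℚ):ℝ)⁻¹ * (((((n:ℝ)+1+a))^(p'+1) * (((n:ℝ)+1+b))^q')⁻¹
            - ((((n:ℝ)+1+a))^p' * (((n:ℝ)+1+b))^(q'+1))⁻¹) :=
      fun n => pf_identity _ _ _ (hpos n a) (hpos n b) hdR (by rw [hdcast]; ring) p' q'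
    have sA : Summable (fun n : ℕ => ((((n:ℝ)+1+a))^(p'+1) * (((n:ℝ)+1+b))^q')⁻¹) :=
      summable_mix a b (p'+1) q' (by omega)
    have sB : Summable (fun n : ℕ => ((((n:ℝ)+1+a))^p' * (((n:ℝ)+1+b))^(q'+1))⁻¹) :=
      summable_mix a b p' (q'+1) (by omega)
    rw [tsum_congr key, tsum_mul_left, Summable.tsum_sub sA sB, ← Rat.cast_inv, ← Rat.smul_def]
    refine Submodule.smul_mem _ _ (sub_mem ?_ ?_)
    · exact ih (m-1) (by omega) w (p'+1) q' a b (by omega) (by omega) (by omega)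
    · exact ih (m-1) (by omega) w p' (q'+1) a b (by omega) (by omega) (by omega)

noncomputable def Gt (k₁ k₂ c₁ c₂ : ℕ) (x : ℕ×ℕ) : ℝ :=
  (((x.1:ℝ)+1+c₁)^k₁ * ((x.1:ℝ)+(x.2:ℝ)+2+c₂)^k₂)⁻¹

lemma Gt_nonneg (k₁ k₂ c₁ c₂ : ℕ) (x : ℕ×ℕ) : 0 ≤ Gt k₁ k₂ c₁ c₂ x := by
  unfold Gt; positivity

lemma Gt_inner (k₁ k₂ c₁ c₂ : ℕ) (h₂ : 2 ≤ k₂) (i : ℕ) :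
    Summable (fun j : ℕ => Gt k₁ k₂ c₁ c₂ (i, j)) := by
  have hi := Nat.cast_nonneg (α:=ℝ) i
  have hc := Nat.cast_nonneg (α:=ℝ) c₂
  have base := summable_shift ((i:ℝ)+2+c₂) ((i:ℝ)+2+c₂)
    (by linarith) (by linarith) 0 k₂ (by omega)
  have := base.mul_left ((((i:ℝ)+1+c₁)^k₁)⁻¹)
  apply this.congr
  intro j
  unfold Gt
  rw [pow_zero, one_mul, ← mul_inv]
  ring_nf

lemma Gt_inner_le (k₁ k₂ c₁ c₂ : ℕ) (h₁ : 1 ≤ k₁) (h₂ : 2 ≤ k₂) (i : ℕ) :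
    (∑' j : ℕ, Gt k₁ k₂ c₁ c₂ (i, j)) ≤ (((i:ℝ)+1)^2)⁻¹ := by
  have hsplit : (∑' j : ℕ, Gt k₁ k₂ c₁ c₂ (i, j))
      = (((i:ℝ)+1+c₁)^k₁)⁻¹ * ∑' j : ℕ, ((((i:ℝ)+1+c₂)+1+(j:ℝ))^k₂)⁻¹ := by
    rw [← tsum_mul_left]
    apply tsum_congr
    intro j
    unfold Gt
    rw [← mul_inv]
    ring_nf
  rw [hsplit]
  have hi1 : (0:ℝ) < (i:ℝ)+1 := by positivity
  have hf1 : (((i:ℝ)+1+c₁)^k₁)⁻¹ ≤ ((i:ℝ)+1)⁻¹ := by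
    apply inv_anti₀ hi1
    have hc := Nat.cast_nonneg (α:=ℝ) c₁
    calc ((i:ℝ)+1) ≤ ((i:ℝ)+1+c₁) := by linarith
      _ = ((i:ℝ)+1+c₁)^1 := (pow_one _).symm
      _ ≤ ((i:ℝ)+1+c₁)^k₁ := pow_le_pow_right₀ (by linarith) h₁
  have hf2 : (∑' j : ℕ, ((((i:ℝ)+1+c₂)+1+(j:ℝ))^k₂)⁻¹) ≤ ((i:ℝ)+1)⁻¹ := by
    calc (∑' j : ℕ, ((((i:ℝ)+1+c₂)+1+(j:ℝ))^k₂)⁻¹) ≤ ((i:ℝ)+1+c₂)⁻¹ :=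
          tail_le ((i:ℝ)+1+c₂) (by positivity) k₂ h₂
      _ ≤ ((i:ℝ)+1)⁻¹ := by
          apply inv_anti₀ hi1
          have : (0:ℝ) ≤ c₂ := Nat.cast_nonneg c₂
          linarith
  have hnn : (0:ℝ) ≤ (∑' j : ℕ, ((((i:ℝ)+1+c₂)+1+(j:ℝ))^k₂)⁻¹) :=
    tsum_nonneg (fun j => by positivity)
  calc (((i:ℝ)+1+c₁)^k₁)⁻¹ * (∑' j : ℕ, ((((i:ℝ)+1+c₂)+1+(j:ℝ))^k₂)⁻¹)
      ≤ ((i:ℝ)+1)⁻¹ * ((i:ℝ)+1)⁻¹ := by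
        apply mul_le_mul hf1 hf2 hnn (by positivity)
    _ = (((i:ℝ)+1)^2)⁻¹ := by rw [← mul_inv]; ring_nf

lemma Gt_outer (k₁ k₂ c₁ c₂ : ℕ) (h₁ : 1 ≤ k₁) (h₂ : 2 ≤ k₂) :
    Summable (fun i : ℕ => ∑' j : ℕ, Gt k₁ k₂ c₁ c₂ (i, j)) := by
  apply Summable.of_nonneg_of_le
    (fun i => tsum_nonneg (fun j => Gt_nonneg k₁ k₂ c₁ c₂ (i,j)))
    (fun i => Gt_inner_le k₁ k₂ c₁ c₂ h₁ h₂ i) summable_inv_sq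

lemma Gt_summable (k₁ k₂ c₁ c₂ : ℕ) (h₁ : 1 ≤ k₁) (h₂ : 2 ≤ k₂) :
    Summable (Gt k₁ k₂ c₁ c₂) := by
  rw [summable_prod_of_nonneg (fun x => Gt_nonneg k₁ k₂ c₁ c₂ x)]
  exact ⟨Gt_inner k₁ k₂ c₁ c₂ h₂, Gt_outer k₁ k₂ c₁ c₂ h₁ h₂⟩

lemma Gt_base_mem (k₁ k₂ : ℕ) (h₁ : 1 ≤ k₁) (h₂ : 2 ≤ k₂) :
    (∑' x : ℕ×ℕ, Gt k₁ k₂ 0 0 x) ∈ Submodule.span ℚ (mzvSet (k₁+k₂) 2) := by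
  apply Submodule.subset_span
  have := double_mem k₁ k₂ h₁ h₂
  have heq : (∑' x : ℕ×ℕ, Gt k₁ k₂ 0 0 x)
      = ∑' x : ℕ×ℕ, (((x.1:ℝ)+1)^k₁ * ((x.1:ℝ)+(x.2:ℝ)+2)^k₂)⁻¹ := by
    apply tsum_congr; intro x; unfold Gt; norm_num
  rw [heq]; exact this

lemma Gt_step2 (k₁ k₂ c₁ c₂ : ℕ) (h₁ : 1 ≤ k₁) (h₂ : 2 ≤ k₂)
    (hmem : (∑' x : ℕ×ℕ, Gt k₁ k₂ c₁ c₂ x) ∈ Submodule.span ℚ (mzvSet (k₁+k₂) 2)) :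
    (∑' x : ℕ×ℕ, Gt k₁ k₂ c₁ (c₂+1) x) ∈ Submodule.span ℚ (mzvSet (k₁+k₂) 2) := by
  rw [Summable.tsum_prod' (Gt_summable k₁ k₂ c₁ (c₂+1) h₁ h₂) (Gt_inner k₁ k₂ c₁ (c₂+1) h₂)]
  have inner_eq : ∀ i : ℕ, (∑' j : ℕ, Gt k₁ k₂ c₁ (c₂+1) (i,j))
      = (∑' j : ℕ, Gt k₁ k₂ c₁ c₂ (i,j)) - Gt k₁ k₂ c₁ c₂ (i,0) := by
    intro i
    have hshift : ∀ j : ℕ, Gt k₁ k₂ c₁ (c₂+1) (i,j) = Gt k₁ k₂ c₁ c₂ (i,j+1) := by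
      intro j; unfold Gt; push_cast; ring_nf
    rw [tsum_congr hshift]
    have h0 := Summable.tsum_eq_zero_add (Gt_inner k₁ k₂ c₁ c₂ h₂ i)
    linarith
  rw [tsum_congr inner_eq]
  have hB : Summable (fun i : ℕ => Gt k₁ k₂ c₁ c₂ (i,0)) := by
    apply (summable_mix c₁ (c₂+1) k₁ k₂ (by omega)).congr
    intro i; unfold Gt; push_cast; ring_nf
  rw [Summable.tsum_sub (Gt_outer k₁ k₂ c₁ c₂ h₁ h₂) hB]
  refine sub_mem ?_ ?_
  · rw [← Summable.tsum_prod' (Gt_summable k₁ k₂ c₁ c₂ h₁ h₂) (Gt_inner k₁ k₂ c₁ c₂ h₂)]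
    exact hmem
  · have heq : (∑' i : ℕ, Gt k₁ k₂ c₁ c₂ (i,0))
        = ∑' i : ℕ, (((i:ℝ)+1+c₁)^k₁ * ((i:ℝ)+1+(c₂+1:ℕ))^k₂)⁻¹ := by
      apply tsum_congr; intro i; unfold Gt; push_cast; ring_nf
    rw [heq]
    exact MX_mem (k₁+k₂) (k₁+k₂) k₁ k₂ c₁ (c₂+1) rfl (by omega) le_rfl

lemma Gt_step1 (k₁ k₂ c₁ c₂ : ℕ) (h₁ : 1 ≤ k₁) (h₂ : 2 ≤ k₂)
    (hmem : (∑' x : ℕ×ℕ, Gt k₁ k₂ c₁ c₂ x) ∈ Submodule.span ℚ (mzvSet (k₁+k₂) 2)) :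
    (∑' x : ℕ×ℕ, Gt k₁ k₂ (c₁+1) c₂ x) ∈ Submodule.span ℚ (mzvSet (k₁+k₂) 2) := by
  rw [Summable.tsum_prod' (Gt_summable k₁ k₂ (c₁+1) c₂ h₁ h₂) (Gt_inner k₁ k₂ (c₁+1) c₂ h₂)]
  have inner_eq : ∀ i : ℕ, (∑' j : ℕ, Gt k₁ k₂ (c₁+1) c₂ (i,j))
      = Gt k₁ k₂ (c₁+1) c₂ (i,0) + ∑' j : ℕ, Gt k₁ k₂ c₁ c₂ (i+1,j) := by
    intro i
    have h0 := Summable.tsum_eq_zero_add (Gt_inner k₁ k₂ (c₁+1) c₂ h₂ i)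
    rw [h0]
    congr 1
    apply tsum_congr; intro j; unfold Gt; push_cast; ring_nf
  rw [tsum_congr inner_eq]
  have sK : Summable (fun i : ℕ => Gt k₁ k₂ (c₁+1) c₂ (i,0)) := by
    apply (summable_mix (c₁+1) (c₂+1) k₁ k₂ (by omega)).congr
    intro i; unfold Gt; push_cast; ring_nf
  have sH1 : Summable (fun i : ℕ => ∑' j : ℕ, Gt k₁ k₂ c₁ c₂ (i+1,j)) :=
    (summable_nat_add_iff 1).2 (Gt_outer k₁ k₂ c₁ c₂ h₁ h₂)
  rw [Summable.tsum_add sK sH1]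
  refine add_mem ?_ ?_
  · have heq : (∑' i : ℕ, Gt k₁ k₂ (c₁+1) c₂ (i,0))
        = ∑' i : ℕ, (((i:ℝ)+1+(c₁+1:ℕ))^k₁ * ((i:ℝ)+1+(c₂+1:ℕ))^k₂)⁻¹ := by
      apply tsum_congr; intro i; unfold Gt; push_cast; ring_nf
    rw [heq]
    exact MX_mem (k₁+k₂) (k₁+k₂) k₁ k₂ (c₁+1) (c₂+1) rfl (by omega) le_rfl
  · have h0 := Summable.tsum_eq_zero_add (f := fun i : ℕ => ∑' j : ℕ, Gt k₁ k₂ c₁ c₂ (i,j))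
      (Gt_outer k₁ k₂ c₁ c₂ h₁ h₂)
    have heq : (∑' i : ℕ, ∑' j : ℕ, Gt k₁ k₂ c₁ c₂ (i+1,j))
        = (∑' i : ℕ, ∑' j : ℕ, Gt k₁ k₂ c₁ c₂ (i,j)) - ∑' j : ℕ, Gt k₁ k₂ c₁ c₂ (0,j) := by
      linarith
    rw [heq]
    refine sub_mem ?_ ?_
    · rw [← Summable.tsum_prod' (Gt_summable k₁ k₂ c₁ c₂ h₁ h₂) (Gt_inner k₁ k₂ c₁ c₂ h₂)]
      exact hmem
    · have hval : (∑' j : ℕ, Gt k₁ k₂ c₁ c₂ (0,j))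
          = (((1+(c₁:ℚ))^k₁)⁻¹ : ℚ) • (∑' j : ℕ, (((j:ℝ)+1+(c₂+1:ℕ))^k₂)⁻¹) := by
        rw [Rat.smul_def, ← tsum_mul_left]
        apply tsum_congr; intro j
        unfold Gt
        push_cast
        rw [← mul_inv]
        congr 1
        ring
      rw [hval]
      exact Submodule.smul_mem _ _ (SZ_mem (k₁+k₂) k₂ (c₂+1) h₂ (by omega))

lemma Gt_mem (k₁ k₂ : ℕ) (h₁ : 1 ≤ k₁) (h₂ : 2 ≤ k₂) : ∀ c₁ c₂ : ℕ,
    (∑' x : ℕ×ℕ, Gt k₁ k₂ c₁ c₂ x) ∈ Submodule.span ℚ (mzvSet (k₁+k₂) 2) := by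
  intro c₁
  induction c₁ with
  | zero =>
    intro c₂
    induction c₂ with
    | zero => exact Gt_base_mem k₁ k₂ h₁ h₂
    | succ c ih => exact Gt_step2 k₁ k₂ 0 c h₁ h₂ ih
  | succ c ih =>
    intro c₂
    exact Gt_step1 k₁ k₂ c c₂ h₁ h₂ (ih c₂)

def e3Equiv : ℕ×ℕ ≃ {p : ℕ+ × ℕ+ // p.1 < p.2} where
  toFun := fun x => ⟨(x.1.succPNat, (x.1+x.2+1).succPNat), by
    rw [← PNat.coe_lt_coe, Nat.succPNat_coe, Nat.succPNat_coe]; omega⟩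
  invFun := fun p => ((p.1.1).natPred, (p.1.2 : ℕ) - (p.1.1 : ℕ) - 1)
  left_inv := fun x => by
    apply Prod.ext
    · simp
    · simp [PNat.natPred, Nat.succPNat_coe]; omega
  right_inv := fun p => by
    have h01 : p.1.1 < p.1.2 := p.2
    have h01' : ((p.1.1 : ℕ+) : ℕ) < ((p.1.2 : ℕ+) : ℕ) := by exact_mod_cast h01
    have hp0 : 0 < ((p.1.1 : ℕ+) : ℕ) := (p.1.1).2
    apply Subtype.ext
    apply Prod.ext
    · show (p.1.1).natPred.succPNat = p.1.1
      exact PNat.succPNat_natPred _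
    · show ((p.1.1).natPred + ((p.1.2 : ℕ) - (p.1.1 : ℕ) - 1) + 1).succPNat = p.1.2
      apply PNat.coe_injective
      rw [Nat.succPNat_coe]
      simp [PNat.natPred]
      omega

/-- Σ_{0<n₁<n₂} 1/((n₁+c₁)^{k₁}(n₂+c₂)^{k₂}) converges and lies in the ℚ-span of
multiple zeta values of weight ≤ k₁+k₂ and depth ≤ 2. -/
theorem stmt_9 (c₁ c₂ : ℕ) (k₁ k₂ : ℕ) (hk₁ : 1 ≤ k₁) (hk₂ : 2 ≤ k₂) :
    Summable (fun p : {p : ℕ+ × ℕ+ // p.1 < p.2} =>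
        (1 : ℝ) / (((p.1.1 : ℝ) + c₁) ^ k₁ * ((p.1.2 : ℝ) + c₂) ^ k₂)) ∧
    (∑' p : {p : ℕ+ × ℕ+ // p.1 < p.2},
        (1 : ℝ) / (((p.1.1 : ℝ) + c₁) ^ k₁ * ((p.1.2 : ℝ) + c₂) ^ k₂))
      ∈ Submodule.span ℚ (mzvSet (k₁ + k₂) 2) := by
  set f : {p : ℕ+ × ℕ+ // p.1 < p.2} → ℝ :=
    fun p => (1 : ℝ) / (((p.1.1 : ℝ) + c₁) ^ k₁ * ((p.1.2 : ℝ) + c₂) ^ k₂) with hf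
  have hcomp : ∀ x : ℕ×ℕ, f (e3Equiv x) = Gt k₁ k₂ c₁ c₂ x := by
    intro x
    show (1 : ℝ) / ((((x.1.succPNat : ℕ+) : ℝ) + c₁) ^ k₁
        * ((((x.1+x.2+1).succPNat : ℕ+) : ℝ) + c₂) ^ k₂) = Gt k₁ k₂ c₁ c₂ x
    rw [succPNat_real, succPNat_real, one_div]
    unfold Gt
    congr 1
    push_cast
    ring
  constructor
  · rw [← e3Equiv.summable_iff]
    exact (Gt_summable k₁ k₂ c₁ c₂ hk₁ hk₂).congr (fun x => (hcomp x).symm)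
  · rw [← e3Equiv.tsum_eq f, tsum_congr hcomp]
    exact Gt_mem k₁ k₂ hk₁ hk₂ c₁ c₂
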